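/- In a tree T with N vertices, if the rumor center is unique, then it coincides with the distance center: the unique vertex maximizing rumor centrality R(·,T) also minimizes distance centrality D(·,T). -/

import Mathlib

noncomputable section

/-- The support (list of vertices) of the unique path from `a` to `b` in a connected graph. -/
def pathSupport {V : Type*} [DecidableEq V] (G : SimpleGraph V) (hG : G.Connected)
    (a b : V) : List V :=
  ((hG.preconnected a b).some.toPath : G.Walk a b).support

/-- `inSub G hG root u x` says that `x` belongs to the subtree rooted at `u`
when the tree `G` is rooted at `root`, i.e. `u` lies on the unique path from `root` to `x`. -/
def inSub {V : Type*} [DecidableEq V] (G : SimpleGraph V) (hG : G.IsTree) (root u x : V) :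
    Prop :=
  u ∈ pathSupport G hG.isConnected root x

/-- `subSize G hG root u` is the number of vertices of the subtree rooted at `u`
with respect to the root `root` (the quantity `T_u^root`). -/
def subSize {V : Type*} [DecidableEq V] (G : SimpleGraph V) (hG : G.IsTree) (root u : V) : ℕ :=
  Nat.card {x : V // inSub G hG root u x}

/-- `permCountOn G S u` is the number of permitted permutations of the vertex set `S`:
bijections `σ : Fin |S| ≃ S` starting at `u` such that every vertex appears after
some already-placed neighbor. -/
def permCountOn {V : Type*} (G : SimpleGraph V) (S : Set V) (u : V) : ℕ :=
  Nat.card {σ : Fin (Nat.card S) ≃ S //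
    (∀ i : Fin (Nat.card S), (i : ℕ) = 0 → (σ i : V) = u) ∧
    ∀ k : Fin (Nat.card S), 0 < (k : ℕ) →
      ∃ j : Fin (Nat.card S), (j : ℕ) < (k : ℕ) ∧ G.Adj (σ j : V) (σ k : V)}

/-- The rumor centrality `R(w,T) = N! / ∏_x T_x^w`. -/
def rumorCent {V : Type*} [Fintype V] [DecidableEq V] (G : SimpleGraph V) (hG : G.IsTree)
    (w : V) : ℚ :=
  (Nat.factorial (Fintype.card V) : ℚ) / ∏ x : V, (subSize G hG w x : ℚ)

namespace RumorAux

open SimpleGraph Walk Finset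

variable {V : Type*} [DecidableEq V] {G : SimpleGraph V} (hG : G.IsTree)
include hG

lemma support_eq_pathSupport {a b : V} (p : G.Walk a b) (hp : p.IsPath) :
    p.support = pathSupport G hG.isConnected a b := by
  have h := hG.existsUnique_path a b
  have : p = (((hG.isConnected.preconnected a b).some.toPath : G.Path a b) : G.Walk a b) :=
    h.unique hp (SimpleGraph.Path.isPath _)
  rw [this]; rfl

lemma length_eq_dist {a b : V} (p : G.Walk a b) (hp : p.IsPath) :
    p.length = G.dist a b := by
  refine le_antisymm ?_ (SimpleGraph.dist_le p)
  obtain ⟨w, hw⟩ := (hG.isConnected.preconnected a b).exists_walk_length_eq_dist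
  have : p = w.bypass := (hG.existsUnique_path a b).unique hp w.bypass_isPath
  rw [this, ← hw]; exact w.length_bypass_le

lemma dist_add_of_mem_support {a b y : V} {p : G.Walk a b} (hp : p.IsPath)
    (hy : y ∈ p.support) : G.dist a y + G.dist y b = G.dist a b := by
  have ht : (p.takeUntil y hy).IsPath := hp.takeUntil hy
  have hd : (p.dropUntil y hy).IsPath := hp.dropUntil hy
  have h1 := length_eq_dist hG _ ht
  have h2 := length_eq_dist hG _ hd
  have h3 := length_eq_dist hG p hp
  have h4 : (p.takeUntil y hy).length + (p.dropUntil y hy).length = p.length := by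
    rw [← SimpleGraph.Walk.length_append, p.take_spec hy]
  omega

lemma inSub_dist {r u x : V} (h : inSub G hG r u x) :
    G.dist r u + G.dist u x = G.dist r x := by
  have hp : (((hG.isConnected.preconnected r x).some.toPath : G.Path r x) : G.Walk r x).IsPath :=
    SimpleGraph.Path.isPath _
  exact dist_add_of_mem_support hG hp h

lemma inSub_of_dist {r u x : V} (h : G.dist r u + G.dist u x = G.dist r x) :
    inSub G hG r u x := by
  classical
  set q1 : G.Walk r u := (((hG.isConnected.preconnected r u).some.toPath : G.Path r u) : G.Walk r u)
  set q2 : G.Walk u x := (((hG.isConnected.preconnected u x).some.toPath : G.Path u x) : G.Walk u x)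
  have hq1 : q1.IsPath := SimpleGraph.Path.isPath _
  have hq2 : q2.IsPath := SimpleGraph.Path.isPath _
  have hlen1 : q1.length = G.dist r u := length_eq_dist hG _ hq1
  have hlen2 : q2.length = G.dist u x := length_eq_dist hG _ hq2
  have hap : (q1.append q2).IsPath := by
    rw [SimpleGraph.Walk.isPath_def, SimpleGraph.Walk.support_append]
    refine List.Nodup.append (hq1.support_nodup) ?_ ?_
    · exact (hq2.support_nodup).sublist (List.tail_sublist _)
    · intro y hy1 hy2
      have hy2' : y ∈ q2.support := List.mem_of_mem_tail hy2
      have e1 := dist_add_of_mem_support hG hq1 hy1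
      have e2 := dist_add_of_mem_support hG hq2 hy2'
      have tri : G.dist r x ≤ G.dist r y + G.dist y x := hG.isConnected.dist_triangle
      have hyu : G.dist y u = 0 := by
        have := G.dist_comm (u := u) (v := y)
        omega
      have : y = u := hG.isConnected.dist_eq_zero_iff.mp hyu
      subst this
      have : q2.support = y :: q2.support.tail := q2.support_eq_cons
      have hnd := hq2.support_nodup
      rw [this] at hnd
      exact (List.nodup_cons.mp hnd).1 hy2
  have : u ∈ (q1.append q2).support := by
    rw [SimpleGraph.Walk.mem_support_append_iff]
    exact Or.inl q1.end_mem_support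
  rwa [support_eq_pathSupport hG _ hap] at this

lemma inSub_self (r x : V) : inSub G hG r x x := by
  have hp : (((hG.isConnected.preconnected r x).some.toPath : G.Path r x) : G.Walk r x).IsPath :=
    SimpleGraph.Path.isPath _
  exact SimpleGraph.Walk.end_mem_support _

lemma inSub_root (r x : V) : inSub G hG r r x :=
  SimpleGraph.Walk.start_mem_support _

lemma onPath_total {a b y z : V} {p : G.Walk a b} (hp : p.IsPath)
    (hy : y ∈ p.support) (hz : z ∈ p.support) :
    G.dist a y + G.dist y z = G.dist a z ∨ G.dist a z + G.dist z y = G.dist a y := by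
  have hsplit : z ∈ (p.takeUntil y hy).support ∨ z ∈ (p.dropUntil y hy).support := by
    have := p.take_spec hy
    rw [← this, SimpleGraph.Walk.mem_support_append_iff] at hz
    exact hz
  rcases hsplit with h | h
  · right; exact dist_add_of_mem_support hG (hp.takeUntil hy) h
  · left
    have e1 := dist_add_of_mem_support hG (hp.dropUntil hy) h
    have e2 := dist_add_of_mem_support hG hp hy
    have e3 := dist_add_of_mem_support hG hp hz
    omega


lemma dist_adj {a b : V} (h : G.Adj a b) : G.dist a b = 1 :=
  SimpleGraph.dist_eq_one_iff_adj.mpr h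

lemma adj_cases {a b j : V} (h : G.Adj a b) (hn : ¬ inSub G hG a b j) :
    inSub G hG b a j := by
  set p : G.Walk a j := (((hG.isConnected.preconnected a j).some.toPath : G.Path a j) : G.Walk a j)
    with hpdef
  have hp : p.IsPath := SimpleGraph.Path.isPath _
  have hb : b ∉ p.support := hn
  have hq : (SimpleGraph.Walk.cons h.symm p).IsPath := hp.cons hb
  have : a ∈ (SimpleGraph.Walk.cons h.symm p).support := by
    rw [SimpleGraph.Walk.support_cons]
    exact List.mem_cons_of_mem _ p.start_mem_support
  rwa [support_eq_pathSupport hG _ hq] at this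

lemma not_both {a b j : V} (h : G.Adj a b) (h1 : inSub G hG a b j) (h2 : inSub G hG b a j) :
    False := by
  have e1 := inSub_dist hG h1
  have e2 := inSub_dist hG h2
  have hd : G.dist a b = 1 := dist_adj hG h
  have hd' : G.dist b a = 1 := by rwa [G.dist_comm] at hd
  omega

instance instDecInSub (r u : V) : DecidablePred (inSub G hG r u) := fun x =>
  inferInstanceAs (Decidable (u ∈ pathSupport G hG.isConnected r x))

lemma subSize_eq_card [Fintype V] (r u : V) :
    subSize G hG r u = (Finset.univ.filter (fun x => inSub G hG r u x)).card := by
  rw [subSize, Nat.card_eq_fintype_card, Fintype.card_subtype]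

lemma subSize_pos [Fintype V] (r u : V) : 0 < subSize G hG r u := by
  have : Nonempty {x : V // inSub G hG r u x} := ⟨⟨u, inSub_self hG r u⟩⟩
  exact Nat.card_pos

lemma subSize_root [Fintype V] (r : V) : subSize G hG r r = Fintype.card V := by
  rw [subSize, Nat.card_eq_fintype_card]
  exact Fintype.card_of_subtype Finset.univ (fun x => by simp [inSub_root hG])

-- adjacent case of the subtree-transfer lemma
lemma subSize_adj {a b x : V} (h : G.Adj a b) (hd : G.dist a x = 1 + G.dist b x)
    (hbx : b ≠ x) : subSize G hG a x = subSize G hG b x := by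
  have hiff : ∀ j, inSub G hG a x j ↔ inSub G hG b x j := by
    intro j
    have hab : G.dist a b = 1 := dist_adj hG h
    have hba : G.dist b a = 1 := by rwa [G.dist_comm] at hab
    constructor
    · intro hj
      have e := inSub_dist hG hj
      have tri1 : G.dist b j ≤ G.dist b x + G.dist x j := hG.isConnected.dist_triangle
      have tri2 : G.dist a j ≤ G.dist a b + G.dist b j := hG.isConnected.dist_triangle
      exact inSub_of_dist hG (by omega)
    · intro hj
      have e := inSub_dist hG hj
      by_cases hcase : inSub G hG a b j
      · have e2 := inSub_dist hG hcase
        exact inSub_of_dist hG (by omega)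
      · have hba' : inSub G hG b a j := adj_cases hG h hcase
        -- both a and x lie on the chosen path from b to j
        set p : G.Walk b j :=
          (((hG.isConnected.preconnected b j).some.toPath : G.Path b j) : G.Walk b j) with hpdef
        have hp : p.IsPath := SimpleGraph.Path.isPath _
        have hamem : a ∈ p.support := hba'
        have hxmem : x ∈ p.support := hj
        have := onPath_total hG hp hamem hxmem
        have hxa : G.dist x a = G.dist a x := G.dist_comm
        have hbx' : G.dist b x ≠ 0 := fun h0 => hbx (hG.isConnected.dist_eq_zero_iff.mp h0)
        omega
  exact Nat.card_congr (Equiv.subtypeEquivRight hiff)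

lemma subSize_transfer_aux {x : V} :
    ∀ {v : V} (q : G.Walk v x), q.IsPath → ∀ {u : V}, u ∈ q.support → u ≠ x →
      subSize G hG v x = subSize G hG u x := by
  intro v q
  induction q with
  | nil =>
    intro _ u hu hux
    simp only [SimpleGraph.Walk.support_nil, List.mem_singleton] at hu
    subst hu; rfl
  | @cons a c d h q ih =>
    intro hq u hu hux
    rw [SimpleGraph.Walk.support_cons, List.mem_cons] at hu
    have hq' : q.IsPath := hq.of_cons
    rcases hu with rfl | hu
    · rfl
    · have hIH := ih hq' hu hux
      have hlen : G.dist a d = 1 + G.dist c d := by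
        have h1 := length_eq_dist hG _ hq
        have h2 := length_eq_dist hG q hq'
        rw [SimpleGraph.Walk.length_cons] at h1
        omega
      have hcd : c ≠ d := by
        intro hcd; subst hcd
        have := dist_add_of_mem_support hG hq' hu
        have h0 : G.dist c c = 0 := by simp
        have : G.dist u c = 0 := by omega
        exact hux (hG.isConnected.dist_eq_zero_iff.mp this)
      rw [subSize_adj hG h hlen hcd]
      exact hIH

lemma subSize_transfer {r u x : V} (hd : G.dist r u + G.dist u x = G.dist r x)
    (hux : u ≠ x) : subSize G hG r x = subSize G hG u x := by
  have hmem : inSub G hG r u x := inSub_of_dist hG hd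
  set p : G.Walk r x := (((hG.isConnected.preconnected r x).some.toPath : G.Path r x) : G.Walk r x)
  exact subSize_transfer_aux hG p (SimpleGraph.Path.isPath _) hmem hux


lemma subSize_compl [Fintype V] {a b : V} (h : G.Adj a b) :
    subSize G hG a b + subSize G hG b a = Fintype.card V := by
  rw [subSize_eq_card, subSize_eq_card]
  have hset : Finset.univ.filter (fun x => inSub G hG b a x)
      = Finset.univ.filter (fun x => ¬ inSub G hG a b x) := by
    ext j
    simp only [Finset.mem_filter, Finset.mem_univ, true_and]
    constructor
    · intro h2 h1; exact not_both hG h h1 h2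
    · intro h1; exact adj_cases hG h h1
  rw [hset]
  classical
  rw [Finset.card_filter_add_card_filter_not, Finset.card_univ]

lemma sum_dist_step [Fintype V] {a b : V} (h : G.Adj a b) :
    (∑ j : V, G.dist b j) + 2 * subSize G hG a b = (∑ j : V, G.dist a j) + Fintype.card V := by
  have key : ∀ j : V, G.dist b j + 2 * (if inSub G hG a b j then 1 else 0)
      = G.dist a j + 1 := by
    intro j
    have hab : G.dist a b = 1 := dist_adj hG h
    have hba : G.dist b a = 1 := dist_adj hG h.symm
    by_cases hj : inSub G hG a b j
    · have e := inSub_dist hG hj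
      simp only [hj, if_true]
      omega
    · have e := inSub_dist hG (adj_cases hG h hj)
      simp only [hj, if_false]
      omega
  have hsum := Finset.sum_congr rfl (fun j (_ : j ∈ Finset.univ) => key j)
  rw [Finset.sum_add_distrib, Finset.sum_add_distrib, ← Finset.mul_sum] at hsum
  rw [← Finset.card_filter] at hsum
  rw [subSize_eq_card hG]
  simpa using hsum

lemma prod_step [Fintype V] {a b : V} (h : G.Adj a b) :
    (∏ x : V, subSize G hG a x) * subSize G hG b a
      = (∏ x : V, subSize G hG b x) * subSize G hG a b := by
  have hne : a ≠ b := h.ne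
  have key : ∀ x : V, x ≠ a → x ≠ b → subSize G hG a x = subSize G hG b x := by
    intro x hxa hxb
    by_cases hc : inSub G hG a b x
    · have e := inSub_dist hG hc
      exact subSize_transfer hG e (Ne.symm hxb)
    · have e := inSub_dist hG (adj_cases hG h hc)
      exact (subSize_transfer hG e (Ne.symm hxa)).symm
  have hmemb : b ∈ Finset.univ.erase a := Finset.mem_erase.mpr ⟨(Ne.symm hne), Finset.mem_univ b⟩
  have hmema : a ∈ Finset.univ.erase b := Finset.mem_erase.mpr ⟨hne, Finset.mem_univ a⟩
  have e1 : (∏ x : V, subSize G hG a x)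
      = subSize G hG a a * (subSize G hG a b *
        ∏ x ∈ (Finset.univ.erase a).erase b, subSize G hG a x) := by
    rw [Finset.mul_prod_erase _ _ hmemb, Finset.mul_prod_erase _ _ (Finset.mem_univ a)]
  have e2 : (∏ x : V, subSize G hG b x)
      = subSize G hG b b * (subSize G hG b a *
        ∏ x ∈ (Finset.univ.erase b).erase a, subSize G hG b x) := by
    rw [Finset.mul_prod_erase _ _ hmema, Finset.mul_prod_erase _ _ (Finset.mem_univ b)]
  have e3 : (∏ x ∈ (Finset.univ.erase a).erase b, subSize G hG a x)
      = ∏ x ∈ (Finset.univ.erase b).erase a, subSize G hG b x := by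
    rw [Finset.erase_right_comm]
    refine Finset.prod_congr rfl ?_
    intro x hx
    rw [Finset.mem_erase, Finset.mem_erase] at hx
    exact key x hx.1 hx.2.1
  rw [e1, e2, e3, subSize_root hG, subSize_root hG]
  ring


lemma key_neighbor [Fintype V] {v : V}
    (hmax : ∀ w : V, rumorCent G hG w ≤ rumorCent G hG v)
    (huniq : ∀ w : V, (∀ x : V, rumorCent G hG x ≤ rumorCent G hG w) → w = v)
    {u : V} (h : G.Adj v u) : 2 * subSize G hG v u < Fintype.card V := by
  set a : ℕ := ∏ x : V, subSize G hG v x with hadef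
  set b : ℕ := ∏ x : V, subSize G hG u x with hbdef
  have ha : 0 < a := Finset.prod_pos (fun x _ => subSize_pos hG v x)
  have hb : 0 < b := Finset.prod_pos (fun x _ => subSize_pos hG u x)
  have hprod : a * subSize G hG u v = b * subSize G hG v u := prod_step hG h
  have hcomp : subSize G hG v u + subSize G hG u v = Fintype.card V := subSize_compl hG h
  have hfac : (0 : ℚ) < (Nat.factorial (Fintype.card V) : ℚ) := by
    exact_mod_cast Nat.factorial_pos _
  have haQ : (0 : ℚ) < (a : ℚ) := by exact_mod_cast ha
  have hbQ : (0 : ℚ) < (b : ℚ) := by exact_mod_cast hb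
  have hru : rumorCent G hG u = (Nat.factorial (Fintype.card V) : ℚ) / (b : ℚ) := by
    rw [rumorCent, hbdef, Nat.cast_prod]
  have hrv : rumorCent G hG v = (Nat.factorial (Fintype.card V) : ℚ) / (a : ℚ) := by
    rw [rumorCent, hadef, Nat.cast_prod]
  have hle : a ≤ b := by
    have := hmax u
    rw [hru, hrv, div_le_div_iff₀ hbQ haQ] at this
    have := le_of_mul_le_mul_left (by linarith : (Nat.factorial (Fintype.card V) : ℚ) * (a:ℚ) ≤ (Nat.factorial (Fintype.card V) : ℚ) * (b:ℚ)) hfac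
    exact_mod_cast this
  have hsle : subSize G hG v u ≤ subSize G hG u v := by
    have h1 : b * subSize G hG v u ≤ b * subSize G hG u v := by
      rw [← hprod]
      exact Nat.mul_le_mul_right _ hle
    exact Nat.le_of_mul_le_mul_left h1 hb
  rcases lt_or_eq_of_le hsle with hlt | heq
  · omega
  · exfalso
    have hab : a = b := by
      have : a * subSize G hG u v = b * subSize G hG u v := by rw [hprod, heq]
      have hpos : 0 < subSize G hG u v := subSize_pos hG u v
      exact Nat.eq_of_mul_eq_mul_right hpos this
    have hre : rumorCent G hG u = rumorCent G hG v := by rw [hru, hrv, hab]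
    have huv : u = v := huniq u (fun x => (hmax x).trans_eq hre.symm)
    subst huv
    exact G.irrefl h

lemma key_all [Fintype V] {v : V}
    (hmax : ∀ w : V, rumorCent G hG w ≤ rumorCent G hG v)
    (huniq : ∀ w : V, (∀ x : V, rumorCent G hG x ≤ rumorCent G hG w) → w = v)
    {w : V} (hw : w ≠ v) : 2 * subSize G hG v w ≤ Fintype.card V := by
  set p : G.Walk v w :=
    (((hG.isConnected.preconnected v w).some.toPath : G.Path v w) : G.Walk v w) with hpdef
  have hp : p.IsPath := SimpleGraph.Path.isPath _
  cases hq : p with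
  | nil => exact absurd rfl hw.symm
  | @cons _ c _ hadj q =>
    have hcmem : c ∈ p.support := by
      rw [hq, SimpleGraph.Walk.support_cons]
      exact List.mem_cons_of_mem _ q.start_mem_support
    have hvc := dist_add_of_mem_support hG hp hcmem
    have hsub : ∀ j, inSub G hG v w j → inSub G hG v c j := by
      intro j hj
      have e1 := inSub_dist hG hj
      have e2 : G.dist v c + G.dist c w = G.dist v w := hvc
      have tri1 : G.dist c j ≤ G.dist c w + G.dist w j := hG.isConnected.dist_triangle
      have tri2 : G.dist v j ≤ G.dist v c + G.dist c j := hG.isConnected.dist_triangle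
      exact inSub_of_dist hG (by omega)
    have hmono : subSize G hG v w ≤ subSize G hG v c := by
      rw [subSize_eq_card, subSize_eq_card]
      apply Finset.card_le_card
      intro j hjm
      rw [Finset.mem_filter] at hjm ⊢
      exact ⟨hjm.1, hsub j hjm.2⟩
    have := key_neighbor hG hmax huniq hadj
    omega

end RumorAux

/-- If the rumor center of a tree is unique, then it is also a distance center:
it minimizes the distance centrality `D(v,T) = ∑_j d(v,j)`. -/
theorem unique_rumor_center_eq_distance_center {V : Type*} [Fintype V] [DecidableEq V]
    (G : SimpleGraph V) (hG : G.IsTree) (v : V)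
    (hmax : ∀ w : V, rumorCent G hG w ≤ rumorCent G hG v)
    (huniq : ∀ w : V, (∀ x : V, rumorCent G hG x ≤ rumorCent G hG w) → w = v) :
    ∀ w : V, (∑ j : V, G.dist v j) ≤ ∑ j : V, G.dist w j := by
  classical
  have main : ∀ (n : ℕ) (w : V), G.dist v w ≤ n →
      (∑ j : V, G.dist v j) ≤ ∑ j : V, G.dist w j := by
    intro n
    induction n with
    | zero =>
      intro w hw
      have h0 : G.dist v w = 0 := Nat.le_zero.mp hw
      have : v = w := hG.isConnected.dist_eq_zero_iff.mp h0
      subst this; exact le_rfl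
    | succ n ih =>
      intro w hw
      by_cases hwv : w = v
      · subst hwv; exact le_rfl
      · set q : G.Walk w v :=
          (((hG.isConnected.preconnected w v).some.toPath : G.Path w v) : G.Walk w v) with hqdef
        have hqp : q.IsPath := SimpleGraph.Path.isPath _
        cases hq : q with
        | nil => exact absurd rfl hwv
        | @cons _ y _ hadj r =>
          have hrp : r.IsPath := by
            have := hqp; rw [hq] at this; exact this.of_cons
          have hlq : q.length = G.dist w v := RumorAux.length_eq_dist hG q hqp
          have hlr : r.length = G.dist y v := RumorAux.length_eq_dist hG r hrp
          have hql : q.length = r.length + 1 := by rw [hq]; rfl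
          have hcomm1 : G.dist v w = G.dist w v := G.dist_comm
          have hcomm2 : G.dist v y = G.dist y v := G.dist_comm
          have hyw : G.dist y w = 1 := RumorAux.dist_adj hG hadj.symm
          have hne : G.dist v w ≠ 0 := fun h0 => hwv (hG.isConnected.dist_eq_zero_iff.mp h0).symm
          have step := RumorAux.sum_dist_step hG (a := y) (b := w) hadj.symm
          have htrans : subSize G hG y w = subSize G hG v w := by
            refine (RumorAux.subSize_transfer hG ?_ hadj.ne').symm
            omega
          have h2 : 2 * subSize G hG v w ≤ Fintype.card V :=
            RumorAux.key_all hG hmax huniq hwv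
          have hy : G.dist v y ≤ n := by omega
          have := ih y hy
          omega
  intro w; exact main (G.dist v w) w le_rfl
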